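/- Let a, b, c be differentiable real-valued functions on an open interval I, with a and c nowhere zero, satisfying the first-order system (15) in the variable t, and suppose b(t) = −a(t) for all t ∈ I. Then a(t)² = c(t)² and a'(t) = 1/2 for all t ∈ I; consequently a(t) = (t − t₀)/2 for some constant t₀. (This is the flat-space solution a = −b = ±c = t/2 of the Spin(7) gradient flow.) -/

import Mathlib

/-- The flat-space solution `a = -b = ±c = t/2` of the Spin(7) gradient flow:
if differentiable `a`, `b`, `c` on an open interval `I` (with `a`, `c`
nowhere zero) satisfy the first-order system (15) in `t` and `b = -a`, then
`a² = c²` and `a' = 1/2` on `I`; consequently `a(t) = (t - t₀)/2` for some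
constant `t₀`. -/
theorem flat_space_solution
    (I : Set ℝ) (hI : IsOpen I) (hI' : I.OrdConnected)
    (a b c : ℝ → ℝ)
    (ha : DifferentiableOn ℝ a I) (hb : DifferentiableOn ℝ b I)
    (hc : DifferentiableOn ℝ c I)
    (hane : ∀ t ∈ I, a t ≠ 0) (hcne : ∀ t ∈ I, c t ≠ 0)
    (heqa : ∀ t ∈ I, deriv a t = 1 - b t / (2 * a t) - (a t) ^ 2 / (c t) ^ 2)
    (heqb : ∀ t ∈ I, deriv b t = (b t) ^ 2 / (2 * (a t) ^ 2) - (b t) ^ 2 / (c t) ^ 2)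
    (heqc : ∀ t ∈ I, deriv c t = a t / c t + b t / (2 * c t))
    (hba : ∀ t ∈ I, b t = -a t) :
    (∀ t ∈ I, (a t) ^ 2 = (c t) ^ 2 ∧ deriv a t = 1 / 2) ∧
    ∃ t₀ : ℝ, ∀ t ∈ I, a t = (t - t₀) / 2 := by
  have key : ∀ t ∈ I, (a t) ^ 2 = (c t) ^ 2 ∧ deriv a t = 1 / 2 := by
    intro t ht
    have hda : DifferentiableAt ℝ a t := (ha t ht).differentiableAt (hI.mem_nhds ht)
    have hbev : b =ᶠ[nhds t] fun s => -a s :=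
      Filter.eventuallyEq_of_mem (hI.mem_nhds ht) hba
    have hdb : deriv b t = -deriv a t := by
      rw [hbev.deriv_eq, deriv.fun_neg]
    have h1 := heqa t ht
    have h2 := heqb t ht
    rw [hdb, hba t ht] at h2
    rw [hba t ht] at h1
    have hA := hane t ht
    have hC := hcne t ht
    have hA2 : (a t) ^ 2 ≠ 0 := pow_ne_zero 2 hA
    have hC2 : (c t) ^ 2 ≠ 0 := pow_ne_zero 2 hC
    field_simp at h1 h2
    have hsq : (a t) ^ 2 = (c t) ^ 2 := by
      have h5 : 4 * a t ^ 2 * (a t ^ 2 - c t ^ 2) = 0 := by linear_combination a t ^ 2 * h1 + a t ^ 2 * h2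
      rcases mul_eq_zero.mp h5 with h | h
      · exact absurd h (by positivity)
      · linarith
    refine ⟨hsq, ?_⟩
    rw [← hsq] at h1
    have h4 : (deriv a t - 1 / 2) * (2 * a t ^ 3) = 0 := by linear_combination a t * h1
    rcases mul_eq_zero.mp h4 with h | h
    · linarith
    · exact absurd h (by positivity)
  refine ⟨key, ?_⟩
  rcases Set.eq_empty_or_nonempty I with hE | ⟨t₁, ht₁⟩
  · exact ⟨0, fun t ht => absurd ht (by simp [hE])⟩
  · refine ⟨t₁ - 2 * a t₁, fun t ht => ?_⟩
    have hconv : Convex ℝ I := convex_iff_ordConnected.mpr hI'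
    have hg : DifferentiableOn ℝ (fun s => a s - s / 2) I :=
      ha.sub ((differentiable_id.div_const 2).differentiableOn)
    have hg' : ∀ x ∈ I, fderivWithin ℝ (fun s => a s - s / 2) I x = 0 := by
      intro x hx
      have hdx : DifferentiableAt ℝ a x := (ha x hx).differentiableAt (hI.mem_nhds hx)
      have hd : HasDerivAt (fun s => a s - s / 2) 0 x := by
        have h : HasDerivAt (fun s => a s - s / 2) (deriv a x - 1 / 2) x :=
          hdx.hasDerivAt.sub ((hasDerivAt_id' x).div_const 2)
        convert h using 1
        rw [(key x hx).2]; norm_num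
      rw [fderivWithin_of_isOpen hI hx, hd.hasFDerivAt.fderiv]
      ext v
      simp
    have hconst := hconv.is_const_of_fderivWithin_eq_zero hg hg' ht ht₁
    linarith [hconst]
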